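/- Let G be an upper semicontinuous decomposition of ℝⁿ into compact convex sets, with quotient map π : ℝⁿ → ℝⁿ/G. Then every continuous map α : I → ℝⁿ/G can be approximately lifted: the set { π ∘ A : A ∈ C(I, ℝⁿ) } is dense in C(I, ℝⁿ/G) with the compact-open topology. -/

import Mathlib

open Set Metric

private lemma pl_mem_segment {E : Type*} [AddCommGroup E] [Module ℝ E] (x : ℕ → E)
    (m j : ℕ) (hjm : j < m) (v : ℝ) (h1 : (j : ℝ) ≤ v) (h2 : v ≤ (j : ℝ) + 1) :
    x 0 + ∑ k ∈ Finset.range m, (max 0 (min 1 (v - (k : ℝ)))) • (x (k + 1) - x k)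
      ∈ segment ℝ (x j) (x (j + 1)) := by
  have hsum : ∑ k ∈ Finset.range m, (max 0 (min 1 (v - (k : ℝ)))) • (x (k + 1) - x k)
      = (x j - x 0) + (max 0 (min 1 (v - (j : ℝ)))) • (x (j + 1) - x j) := by
    rw [Finset.range_eq_Ico, ← Finset.sum_Ico_consecutive _ (Nat.zero_le (j + 1)) hjm]
    have h0 : ∑ k ∈ Finset.Ico (j + 1) m, (max 0 (min 1 (v - (k : ℝ)))) • (x (k + 1) - x k)
        = 0 := by
      refine Finset.sum_eq_zero fun k hk => ?_
      have hk' : (j : ℝ) + 1 ≤ (k : ℝ) := by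
        exact_mod_cast (Finset.mem_Ico.1 hk).1
      have : max 0 (min 1 (v - (k : ℝ))) = 0 :=
        max_eq_left ((min_le_right _ _).trans (by linarith))
      rw [this, zero_smul]
    rw [h0, add_zero, ← Finset.range_eq_Ico, Finset.sum_range_succ]
    congr 1
    have h1' : ∀ k ∈ Finset.range j, (max 0 (min 1 (v - (k : ℝ)))) • (x (k + 1) - x k)
        = x (k + 1) - x k := by
      intro k hk
      have hk' : (k : ℝ) + 1 ≤ (j : ℝ) := by
        exact_mod_cast Nat.succ_le_of_lt (Finset.mem_range.1 hk)
      have : max 0 (min 1 (v - (k : ℝ))) = 1 := by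
        rw [min_eq_left (by linarith), max_eq_right zero_le_one]
      rw [this, one_smul]
    rw [Finset.sum_congr rfl h1', Finset.sum_range_sub]
  rw [hsum, segment_eq_image']
  refine ⟨max 0 (min 1 (v - (j : ℝ))), ⟨le_max_left _ _, max_le zero_le_one (min_le_left _ _)⟩, ?_⟩
  module

/-- If `G` is an upper semicontinuous decomposition of `ℝⁿ` into compact convex
sets with quotient map `π`, then every map `α : I → ℝⁿ/G` can be approximately lifted:
`{ π ∘ A : A ∈ C(I, ℝⁿ) }` is dense in `C(I, ℝⁿ/G)` (compact-open topology). -/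
theorem convex_decomposition_approximate_lifting_arc
    (n : ℕ) (S : Setoid (EuclideanSpace ℝ (Fin n)))
    (hcompact : ∀ x, IsCompact {y | S x y})
    (hconvex : ∀ x, Convex ℝ {y | S x y})
    (hproper : IsProperMap (Quotient.mk S)) :
    Dense {g : C(unitInterval, Quotient S) |
      ∃ A : C(unitInterval, EuclideanSpace ℝ (Fin n)),
        g = ContinuousMap.comp ⟨Quotient.mk S, continuous_quotient_mk'⟩ A} := by
  classical
  set π : EuclideanSpace ℝ (Fin n) → Quotient S := Quotient.mk S with hπdef
  have hπcont : Continuous π := continuous_quotient_mk'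
  -- fibers of π are compact, convex, nonempty
  have hfib : ∀ q : Quotient S,
      IsCompact (π ⁻¹' {q}) ∧ Convex ℝ (π ⁻¹' {q}) ∧ (π ⁻¹' {q}).Nonempty := by
    intro q
    have hq : π ⁻¹' {q} = {y | S q.out y} := by
      ext y
      simp only [mem_preimage, mem_singleton_iff, mem_setOf_eq, hπdef]
      constructor
      · intro h
        exact Setoid.symm (Quotient.exact (h.trans q.out_eq.symm))
      · intro h
        rw [← q.out_eq]
        exact Quotient.sound (Setoid.symm h)
    rw [hq]
    exact ⟨hcompact _, hconvex _, ⟨q.out, Setoid.refl _⟩⟩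
  -- density via the basis of the compact-open topology
  have hb := TopologicalSpace.isTopologicalBasis_of_subbasis
      (ContinuousMap.compactOpen_eq (X := unitInterval) (Y := Quotient S))
  rw [hb.dense_iff]
  rintro o ⟨F, ⟨hFfin, hFsub⟩, rfl⟩ ⟨g, hg⟩
  rw [mem_sInter] at hg
  have hKU : ∀ e ∈ F, ∃ K U, IsCompact K ∧ IsOpen U ∧
      {f : C(unitInterval, Quotient S) | MapsTo f K U} = e := by
    intro e he
    rcases hFsub he with ⟨K, hK, U, hU, rfl⟩
    exact ⟨K, U, hK, hU, rfl⟩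
  choose! K U hK hU hKUe using hKU
  -- target open sets in the quotient
  set V : unitInterval → Set (Quotient S) := fun t => ⋂ e ∈ {e ∈ F | t ∈ K e}, U e with hVdef
  have hVopen : ∀ t, IsOpen (V t) := fun t =>
    Set.Finite.isOpen_biInter (hFfin.subset (sep_subset _ _)) (fun e he => hU e he.1)
  have hgV : ∀ t, g t ∈ V t := by
    intro t
    refine mem_iInter₂.2 fun e he => ?_
    have hge : g ∈ {f : C(unitInterval, Quotient S) | MapsTo f (K e) (U e)} := by
      rw [hKUe e he.1]; exact hg e he.1
    exact hge he.2
  -- convex open nbhds of fibers and saturated shrinkings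
  have key : ∀ t : unitInterval, ∃ (W : Set (EuclideanSpace ℝ (Fin n))) (O : Set (Quotient S)), IsOpen W ∧ Convex ℝ W ∧
      IsOpen O ∧ g t ∈ O ∧ π ⁻¹' O ⊆ W ∧ W ⊆ π ⁻¹' (V t) := by
    intro t
    obtain ⟨hc, hconv, hne⟩ := hfib (g t)
    have hsub : π ⁻¹' {g t} ⊆ π ⁻¹' (V t) :=
      preimage_mono (singleton_subset_iff.2 (hgV t))
    obtain ⟨r, hr, hrsub⟩ := hc.exists_thickening_subset_open ((hVopen t).preimage hπcont) hsub
    set W := thickening r (π ⁻¹' {g t}) with hWdef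
    refine ⟨W, (π '' Wᶜ)ᶜ, isOpen_thickening, hconv.thickening r,
      ((hproper.isClosedMap _ isOpen_thickening.isClosed_compl).isOpen_compl), ?_, ?_, hrsub⟩
    · intro hmem
      rcases hmem with ⟨y, hyW, hyeq⟩
      exact hyW (self_subset_thickening hr _ (by simp [hyeq]))
    · intro y hy
      by_contra hyW
      exact hy (mem_image_of_mem π hyW)
  choose W O hWopen hWconv hOopen hgO hOW hWV using key
  -- the open cover J of the interval
  set J : unitInterval → Set unitInterval := fun t =>
    (⇑g ⁻¹' (O t)) ∩ ⋂ e ∈ {e ∈ F | t ∉ K e}, (K e)ᶜ with hJdef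
  have hJopen : ∀ t, IsOpen (J t) := fun t =>
    ((hOopen t).preimage g.continuous).inter <|
      Set.Finite.isOpen_biInter (hFfin.subset (sep_subset _ _))
        (fun e he => (hK e he.1).isClosed.isOpen_compl)
  have hmemJ : ∀ t, t ∈ J t := fun t => ⟨hgO t, mem_iInter₂.2 fun e he => he.2⟩
  obtain ⟨δ, hδ, hball⟩ := lebesgue_number_lemma_of_metric isCompact_univ hJopen
      (fun t _ => mem_iUnion.2 ⟨t, hmemJ t⟩)
  -- the mesh
  obtain ⟨m₀, hm₀⟩ := exists_nat_gt (1 / δ)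
  set m := m₀ + 1 with hmdef
  have hmpos : (0 : ℝ) < (m : ℝ) := by positivity
  have hinv : 1 / (m : ℝ) < δ := by
    have h1 : 1 / δ < (m : ℝ) := lt_of_lt_of_le hm₀ (by exact_mod_cast Nat.le_succ m₀)
    rw [div_lt_iff₀ hδ] at h1
    rw [div_lt_iff₀ hmpos]
    nlinarith
  -- nodes
  have hptmem : ∀ j : ℕ, min ((j : ℝ) / m) 1 ∈ unitInterval :=
    fun j => ⟨le_min (by positivity) zero_le_one, min_le_right _ _⟩
  set pt : ℕ → unitInterval := fun j => ⟨min ((j : ℝ) / m) 1, hptmem j⟩ with hptdef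
  have hptval : ∀ j : ℕ, j ≤ m → (pt j : ℝ) = (j : ℝ) / m := by
    intro j hj
    exact min_eq_left (by rw [div_le_one hmpos]; exact_mod_cast hj)
  -- lifted points
  have hxex : ∀ j : ℕ, ∃ y : EuclideanSpace ℝ (Fin n), π y = g (pt j) := fun j => Quotient.exists_rep _
  choose x hx using hxex
  -- the piecewise linear lift
  set A : C(unitInterval, EuclideanSpace ℝ (Fin n)) :=
    ⟨fun u => x 0 + ∑ k ∈ Finset.range m,
        (max 0 (min 1 ((u : ℝ) * m - (k : ℝ)))) • (x (k + 1) - x k), by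
      refine continuous_const.add (continuous_finset_sum _ fun k _ => ?_)
      exact (continuous_const.max (continuous_const.min
        ((continuous_subtype_val.mul continuous_const).sub continuous_const))).smul
        continuous_const⟩ with hAdef
  refine ⟨ContinuousMap.comp ⟨π, hπcont⟩ A, ?_, A, rfl⟩
  rw [mem_sInter]
  intro e he
  rw [← hKUe e he]
  intro s hs
  simp only [ContinuousMap.comp_apply, ContinuousMap.coe_mk, mem_setOf_eq]
  -- locate s in the partition
  set j : ℕ := min ⌊(s : ℝ) * m⌋₊ (m - 1) with hjdef
  have hjm : j < m := lt_of_le_of_lt (min_le_right _ _) (Nat.sub_lt (by omega) one_pos)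
  have hsm0 : (0 : ℝ) ≤ (s : ℝ) * m := mul_nonneg s.2.1 hmpos.le
  have hj1 : (j : ℝ) ≤ (s : ℝ) * m := by
    refine le_trans ?_ (Nat.floor_le hsm0)
    exact_mod_cast min_le_left _ _
  have hj2 : (s : ℝ) * m ≤ (j : ℝ) + 1 := by
    rcases le_or_gt ⌊(s : ℝ) * m⌋₊ (m - 1) with h | h
    · rw [hjdef, min_eq_left h]
      exact (Nat.lt_floor_add_one _).le
    · have hje : j = m - 1 := min_eq_right h.le
      have hsm : (s : ℝ) * m ≤ (m : ℝ) := by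
        have hs2 := s.2.2
        nlinarith
      rw [hje]
      have hcast : ((m - 1 : ℕ) : ℝ) + 1 = (m : ℝ) := by
        have h1m : 1 ≤ m := by omega
        push_cast [Nat.cast_sub h1m]
        ring
      rw [hcast]
      exact hsm
  have hs1 : (j : ℝ) / m ≤ (s : ℝ) := (div_le_iff₀ hmpos).2 hj1
  have hs2 : (s : ℝ) ≤ ((j : ℝ) + 1) / m := (le_div_iff₀ hmpos).2 hj2
  -- find the member of the cover containing the whole subinterval
  obtain ⟨t₀, ht₀⟩ := hball (pt j) (mem_univ _)
  have hptj : (pt j : ℝ) = (j : ℝ) / m := hptval j hjm.le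
  have hdist : ∀ u : unitInterval, (pt j : ℝ) ≤ (u : ℝ) →
      (u : ℝ) ≤ (pt j : ℝ) + 1 / m → u ∈ J t₀ := by
    intro u h1 h2
    apply ht₀
    rw [mem_ball, Subtype.dist_eq, Real.dist_eq, abs_of_nonneg (by linarith)]
    linarith
  have hsJ : s ∈ J t₀ := by
    refine hdist s ?_ ?_ <;> rw [hptj]
    · exact hs1
    · rw [← add_div]; exact hs2
  have hjJ : pt j ∈ J t₀ := hdist _ le_rfl (le_add_of_nonneg_right (by positivity))
  have hj1J : pt (j + 1) ∈ J t₀ := by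
    refine hdist _ ?_ ?_ <;> rw [hptj, hptval (j + 1) hjm]
    · gcongr
      exact_mod_cast Nat.le_succ j
    · rw [← add_div]
      push_cast
      exact le_rfl
  -- the endpoints of the segment lie in W t₀
  have hxjW : x j ∈ W t₀ := hOW t₀ (by rw [mem_preimage, hx j]; exact hjJ.1)
  have hxj1W : x (j + 1) ∈ W t₀ := hOW t₀ (by rw [mem_preimage, hx (j + 1)]; exact hj1J.1)
  have hseg : A s ∈ segment ℝ (x j) (x (j + 1)) :=
    pl_mem_segment x m j hjm ((s : ℝ) * m) hj1 hj2
  have hAW : A s ∈ W t₀ := (hWconv t₀).segment_subset hxjW hxj1W hseg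
  have hAV : π (A s) ∈ V t₀ := hWV t₀ hAW
  have ht₀K : t₀ ∈ K e := by
    by_contra hnot
    exact (mem_iInter₂.1 hsJ.2 e ⟨he, hnot⟩) hs
  exact mem_iInter₂.1 hAV e ⟨he, ht₀K⟩
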